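/- arXiv:1901.04270 — 5 statements merged into one kernel-verified Lean document; each statement's English description precedes it below -/
import Mathlib

section
/- For every integer g ≥ 1, the maximum M of G(t) = ∏_{k=1}^g (t - k²) over the interval 0 ≤ t ≤ g²+1 satisfies M ≥ (2g-1)!/g. -/
lemma aux1 (n k : ℕ) : n.factorial * ∏ i ∈ Finset.range k, (n+1+i) = (n+k).factorial := by
  induction k with
  | zero => simp
  | succ k ih =>
    rw [Finset.prod_range_succ, ← mul_assoc, ih,
      show n + (k+1) = (n+k) + 1 by omega, Nat.factorial_succ]
    ring

lemma key (g : ℕ) (hg : 1 ≤ g) :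
    g * ∏ k ∈ Finset.Icc 1 (g-1), (g^2 - k^2) = Nat.factorial (2*g-1) := by
  have hIcc : Finset.Icc 1 (g-1) = Finset.Ico 1 g := by
    rw [show g = (g-1)+1 by omega, Finset.Ico_add_one_right_eq_Icc]
    simp
  rw [hIcc, Finset.prod_Ico_eq_prod_range]
  have h1 : ∀ i ∈ Finset.range (g-1), g^2-(1+i)^2 = (g-1-i)*(g+1+i) := by
    intro i hi
    simp only [Finset.mem_range] at hi
    rw [Nat.sq_sub_sq]
    have : g - (1+i) = g-1-i := by omega
    have h2 : g + (1+i) = g+1+i := by omega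
    rw [this, h2, mul_comm]
  rw [Finset.prod_congr rfl h1, Finset.prod_mul_distrib]
  have h3 : ∏ i ∈ Finset.range (g-1), (g-1-i) = (g-1).factorial := by
    have := Finset.prod_range_reflect (fun j => j+1) (g-1)
    rw [Finset.prod_range_add_one_eq_factorial] at this
    rw [← this]
    apply Finset.prod_congr rfl
    intro i hi
    simp only [Finset.mem_range] at hi
    omega
  rw [h3, ← mul_assoc]
  have : (g:ℕ) * (g-1).factorial = g.factorial := by
    rw [show g = (g-1)+1 by omega, Nat.factorial_succ]
    simp
  rw [this, aux1, show g + (g-1) = 2*g-1 by omega]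

theorem stmt_0 (g : ℕ) (hg : 1 ≤ g)
    (G : ℝ → ℝ) (hG : ∀ t, G t = ∏ k ∈ Finset.Icc 1 g, (t - (k : ℝ)^2))
    (M : ℝ) (hM : IsGreatest (G '' Set.Icc (0 : ℝ) ((g : ℝ)^2 + 1)) M) :
    M ≥ (Nat.factorial (2 * g - 1) : ℝ) / g := by
  set t : ℝ := (g:ℝ)^2 + 1 with ht
  have hmem : G t ∈ G '' Set.Icc (0:ℝ) ((g:ℝ)^2+1) := by
    refine ⟨t, ?_, rfl⟩
    constructor
    · positivity
    · exact le_rfl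
  have hMt : G t ≤ M := hM.2 hmem
  have hsplit : G t = (∏ k ∈ Finset.Icc 1 (g-1), (t - (k:ℝ)^2)) * (t - (g:ℝ)^2) := by
    rw [hG]
    rw [show g = (g-1)+1 by omega]
    rw [Finset.prod_Icc_succ_top (by omega)]
    congr 2 <;> try (congr 1; omega)
  have hlast : t - (g:ℝ)^2 = 1 := by rw [ht]; ring
  -- lower bound on product
  have hprod : (∏ k ∈ Finset.Icc 1 (g-1), ((g^2 - k^2 : ℕ) : ℝ)) ≤
      ∏ k ∈ Finset.Icc 1 (g-1), (t - (k:ℝ)^2) := by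
    apply Finset.prod_le_prod
    · intro k _; positivity
    · intro k hk
      simp only [Finset.mem_Icc] at hk
      have hk2 : k^2 ≤ g^2 := Nat.pow_le_pow_left (by omega) 2
      rw [Nat.cast_sub hk2]
      push_cast
      rw [ht]
      nlinarith [sq_nonneg ((k:ℝ))]
  have hcast : (∏ k ∈ Finset.Icc 1 (g-1), ((g^2 - k^2 : ℕ) : ℝ)) =
      ((∏ k ∈ Finset.Icc 1 (g-1), (g^2 - k^2) : ℕ) : ℝ) := by
    rw [Nat.cast_prod]
  have hkey := key g hg
  have hgpos : (0:ℝ) < g := by exact_mod_cast hg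
  rw [ge_iff_le, div_le_iff₀ hgpos]
  calc ((Nat.factorial (2*g-1) : ℕ) : ℝ)
      = ((g * ∏ k ∈ Finset.Icc 1 (g-1), (g^2 - k^2) : ℕ) : ℝ) := by rw [hkey]
    _ = (g:ℝ) * ((∏ k ∈ Finset.Icc 1 (g-1), (g^2 - k^2) : ℕ) : ℝ) := by push_cast; ring
    _ ≤ (g:ℝ) * (∏ k ∈ Finset.Icc 1 (g-1), (t - (k:ℝ)^2)) := by
        apply mul_le_mul_of_nonneg_left _ (le_of_lt hgpos)
        rw [← hcast]; exact hprod
    _ = G t * g := by rw [hsplit, hlast]; ring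
    _ ≤ M * g := by
        apply mul_le_mul_of_nonneg_right hMt (le_of_lt hgpos)
end

section
/- For each integer k with 1 ≤ k ≤ g, the derivative of p satisfies p'(k) = (-1)^{g-k} · α·(g+k)!·(g-k)!/k. -/
open Finset

lemma prod_Icc_id_fact (n : ℕ) : ∏ j ∈ Finset.Icc 1 n, j = n.factorial := by
  induction n with
  | zero => simp
  | succ n ih =>
    rw [Finset.prod_Icc_succ_top (by omega), ih, Nat.factorial_succ, mul_comm]

lemma prod_Icc_add_fact (m n : ℕ) :
    (∏ j ∈ Finset.Icc 1 n, (m + j)) * m.factorial = (m + n).factorial := by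
  induction n with
  | zero => simp
  | succ n ih =>
    rw [Finset.prod_Icc_succ_top (by omega)]
    have : (m + (n + 1)).factorial = (m + (n + 1)) * (m + n).factorial := by
      rw [← Nat.add_assoc, Nat.factorial_succ]
    rw [this, ← ih]; ring

lemma prod_Icc_sub_left (k : ℕ) (hk : 1 ≤ k) :
    ∏ j ∈ Finset.Icc 1 (k - 1), (k - j) = (k - 1).factorial := by
  rw [← prod_Icc_id_fact]
  apply Finset.prod_nbij' (fun j => k - j) (fun j => k - j)
  all_goals intro a ha <;> simp only [Finset.mem_Icc] at * <;> omega

lemma prod_Icc_sub_right (k g : ℕ) :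
    ∏ j ∈ Finset.Icc (k + 1) g, (j - k) = (g - k).factorial := by
  rw [← prod_Icc_id_fact]
  apply Finset.prod_nbij' (fun j => j - k) (fun j => j + k)
  all_goals intro a ha <;> simp only [Finset.mem_Icc] at * <;> omega

theorem stmt_4 (g : ℕ) (hg : 1 ≤ g) (α c : ℝ) (hα : 0 < α) (hc : 0 < c)
    (p : ℝ → ℝ)
    (hp : ∀ x, p x = α * ∏ k ∈ Finset.Icc 1 g, (x^2 - (k : ℝ)^2) - Real.sqrt c)
    (k : ℕ) (hk1 : 1 ≤ k) (hkg : k ≤ g) :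
    deriv p (k : ℝ)
      = (-1 : ℝ)^(g - k) * (α * (Nat.factorial (g + k)) * (Nat.factorial (g - k)) / k) := by
  have hkmem : k ∈ Finset.Icc 1 g := Finset.mem_Icc.2 ⟨hk1, hkg⟩
  -- the product function and its derivative
  have hprod : ∀ x : ℝ, HasDerivAt (fun y => ∏ j ∈ Finset.Icc 1 g, (y^2 - (j:ℝ)^2))
      (∑ i ∈ Finset.Icc 1 g, (∏ j ∈ (Finset.Icc 1 g).erase i, (x^2 - (j:ℝ)^2)) * (2*x)) x := by
    intro x
    have h := HasDerivAt.finset_prod (u := Finset.Icc 1 g)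
      (f := fun j (y : ℝ) => y^2 - (j:ℝ)^2) (f' := fun _ => 2*x) (x := x) ?_
    · simpa [Finset.prod_fn] using h
    · intro i _
      simpa using ((hasDerivAt_pow 2 x).sub_const ((i:ℝ)^2))
  have hP : HasDerivAt p
      ((∑ i ∈ Finset.Icc 1 g, (∏ j ∈ (Finset.Icc 1 g).erase i,
        ((k:ℝ)^2 - (j:ℝ)^2)) * (2*(k:ℝ))) * α) (k : ℝ) := by
    have := ((hprod (k:ℝ)).const_mul α).sub_const (Real.sqrt c)
    have hfun : (fun x => α * ∏ j ∈ Finset.Icc 1 g, (x^2 - (j:ℝ)^2) - Real.sqrt c) = p := by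
      funext x; rw [hp x]
    rw [hfun] at this
    rw [mul_comm _ α]; exact this
  rw [hP.deriv]
  -- the sum collapses to a single term
  have hsum : (∑ i ∈ Finset.Icc 1 g, (∏ j ∈ (Finset.Icc 1 g).erase i,
      ((k:ℝ)^2 - (j:ℝ)^2)) * (2*(k:ℝ)))
      = (∏ j ∈ (Finset.Icc 1 g).erase k, ((k:ℝ)^2 - (j:ℝ)^2)) * (2*(k:ℝ)) := by
    apply Finset.sum_eq_single_of_mem _ hkmem
    intro i hi hik
    have hkmem' : k ∈ (Finset.Icc 1 g).erase i := Finset.mem_erase.2 ⟨(Ne.symm hik), hkmem⟩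
    rw [Finset.prod_eq_zero hkmem' (by ring), zero_mul]
  rw [hsum]
  -- split the erased set
  have hset : (Finset.Icc 1 g).erase k = Finset.Icc 1 (k-1) ∪ Finset.Icc (k+1) g := by
    ext a
    simp only [Finset.mem_erase, Finset.mem_Icc, Finset.mem_union]
    omega
  have hdisj : Disjoint (Finset.Icc 1 (k-1)) (Finset.Icc (k+1) g) := by
    rw [Finset.disjoint_left]
    intro a ha hb
    simp only [Finset.mem_Icc] at ha hb
    omega
  have hfactor : ∀ j : ℕ, (k:ℝ)^2 - (j:ℝ)^2 = ((k:ℝ) - j) * ((k:ℝ) + j) := by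
    intro j; ring
  -- product over left part
  have hleft : ∏ j ∈ Finset.Icc 1 (k-1), ((k:ℝ) - j) = ((k-1).factorial : ℝ) := by
    rw [← prod_Icc_sub_left k hk1]
    push_cast
    apply Finset.prod_congr rfl
    intro j hj
    simp only [Finset.mem_Icc] at hj
    have : j ≤ k := by omega
    push_cast [Nat.cast_sub this]
    ring
  have hright : ∏ j ∈ Finset.Icc (k+1) g, ((k:ℝ) - j)
      = (-1:ℝ)^(g-k) * ((g-k).factorial : ℝ) := by
    have hcard : (Finset.Icc (k+1) g).card = g - k := by
      rw [Nat.card_Icc]; omega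
    have h1 : ∏ j ∈ Finset.Icc (k+1) g, ((k:ℝ) - j)
        = ∏ j ∈ Finset.Icc (k+1) g, (-1 : ℝ) * ((j:ℝ) - k) := by
      apply Finset.prod_congr rfl; intro j hj; ring
    rw [h1, Finset.prod_mul_distrib, Finset.prod_const, hcard]
    congr 1
    rw [← prod_Icc_sub_right k g]
    push_cast
    apply Finset.prod_congr rfl
    intro j hj
    simp only [Finset.mem_Icc] at hj
    have : k ≤ j := by omega
    push_cast [Nat.cast_sub this]
    ring
  -- product of (k + j) over the full interval
  have hfull : (∏ j ∈ Finset.Icc 1 g, ((k:ℝ) + j)) * (k.factorial : ℝ)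
      = ((g+k).factorial : ℝ) := by
    have := prod_Icc_add_fact k g
    have : ((∏ j ∈ Finset.Icc 1 g, (k + j)) * k.factorial : ℕ) = ((k + g).factorial : ℕ) := this
    have := congrArg (fun n : ℕ => (n : ℝ)) this
    push_cast at this
    rw [Nat.add_comm g k]
    convert this using 2
  -- erase product of (k + j)
  have hmulerase : ((k:ℝ) + k) * ∏ j ∈ (Finset.Icc 1 g).erase k, ((k:ℝ) + j)
      = ∏ j ∈ Finset.Icc 1 g, ((k:ℝ) + j) :=
    Finset.mul_prod_erase _ (fun j : ℕ => (k:ℝ) + j) hkmem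
  set E := ∏ j ∈ (Finset.Icc 1 g).erase k, ((k:ℝ) + j) with hE
  -- erase product of (k - j)
  have hminus : ∏ j ∈ (Finset.Icc 1 g).erase k, ((k:ℝ) - j)
      = ((k-1).factorial : ℝ) * ((-1:ℝ)^(g-k) * ((g-k).factorial : ℝ)) := by
    rw [hset, Finset.prod_union hdisj, hleft, hright]
  have hsplit : ∏ j ∈ (Finset.Icc 1 g).erase k, ((k:ℝ)^2 - (j:ℝ)^2)
      = (∏ j ∈ (Finset.Icc 1 g).erase k, ((k:ℝ) - j)) * E := by
    rw [hE, ← Finset.prod_mul_distrib]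
    apply Finset.prod_congr rfl
    intro j _; ring
  rw [hsplit, hminus]
  -- now pure algebra
  have hkpos : (0:ℝ) < k := by exact_mod_cast hk1
  have hkfact : (k.factorial : ℝ) = k * ((k-1).factorial : ℝ) := by
    have := Nat.mul_factorial_pred (n := k) (by omega)
    exact_mod_cast this.symm
  have hEeq : 2 * (k:ℝ) * E * (k.factorial : ℝ) = ((g+k).factorial : ℝ) := by
    rw [← hfull, ← hmulerase]; ring
  have hfactne : ((k-1).factorial : ℝ) ≠ 0 := by positivity
  rw [hkfact] at hEeq
  rw [← hEeq]
  field_simp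
end

section
/- Let x̂ ∈ ℝ satisfy 2p(x̂) + x̂·p'(x̂) − 4x̂²/ℏ² = 0 and 2x̂² − ℏ²p(x̂) > 0, and set z = (1/ℏ)e^{iθ}√(2x̂² − ℏ²p(x̂)) for some θ ∈ ℝ. Then X = [[x̂,0],[0,−x̂]], Y = [[0,z],[z̄,0]], Z = (1/(iℏ))[X,Y] satisfy [X,Y] = iℏZ, [[X,Y],Y] = ℏ²(p(X)p'(X) + T(X,Y²)), and [[Y,X],X] = ℏ²(2Y³ + Yp(X) + p(X)Y), where T(X,Y²) = (p'(X)Y² + Y²p'(X))/2. Moreover Z ≠ 0. -/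
set_option maxHeartbeats 2000000 in
theorem stmt_11 (g : ℕ) (hg : 1 ≤ g) (α c ℏ : ℝ)
    (hα : 0 < α) (hc : 0 < c) (hℏ : 0 < ℏ)
    (p : ℝ → ℝ)
    (hp : ∀ x, p x = α * ∏ k ∈ Finset.Icc 1 g, (x^2 - (k : ℝ)^2) - Real.sqrt c)
    (xh : ℝ)
    (hx1 : 2 * p xh + xh * deriv p xh - 4 * xh^2 / ℏ^2 = 0)
    (hx2 : 2 * xh^2 - ℏ^2 * p xh > 0)
    (θ : ℝ) (z : ℂ)
    (hz : z = (1 / ℏ : ℝ) * Complex.exp (θ * Complex.I)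
            * (Real.sqrt (2 * xh^2 - ℏ^2 * p xh) : ℝ))
    (X Y Z pX p'X : Matrix (Fin 2) (Fin 2) ℂ)
    (hX : X = !![Complex.ofReal xh, 0; 0, Complex.ofReal (-xh)])
    (hY : Y = !![0, z; (starRingEnd ℂ) z, 0])
    (hZ : Z = (1 / (Complex.I * ℏ)) • (X * Y - Y * X))
    (hpX : pX = !![Complex.ofReal (p xh), 0; 0, Complex.ofReal (p (-xh))])
    (hp'X : p'X = !![Complex.ofReal (deriv p xh), 0; 0, Complex.ofReal (deriv p (-xh))]) :
    X * Y - Y * X = (Complex.I * ℏ) • Z ∧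
    (X * Y - Y * X) * Y - Y * (X * Y - Y * X)
      = ((ℏ : ℂ)^2) • (pX * p'X + (p'X * Y^2 + Y^2 * p'X) / 2) ∧
    (Y * X - X * Y) * X - X * (Y * X - X * Y)
      = ((ℏ : ℂ)^2) • (2 • (Y^3) + Y * pX + pX * Y) ∧
    Z ≠ 0 := by
  have hℏ0 : (ℏ:ℂ) ≠ 0 := Complex.ofReal_ne_zero.mpr hℏ.ne'
  have hI : Complex.I * (ℏ:ℂ) ≠ 0 := mul_ne_zero Complex.I_ne_zero hℏ0
  -- p is even, so deriv p is odd
  have hpeven : ∀ x, p (-x) = p x := fun x => by simp only [hp, neg_sq]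
  have hpe : p (-xh) = p xh := hpeven xh
  have hdo : deriv p (-xh) = - deriv p xh := by
    have h1 : deriv (fun x => p (-x)) xh = - deriv p (-xh) := deriv_comp_neg p xh
    simp only [hpeven] at h1
    linarith
  -- xh ≠ 0
  have hx0 : xh ≠ 0 := by
    intro h
    rw [h] at hx1 hx2
    norm_num at hx1 hx2
    nlinarith
  -- z * conj z
  have hexp : Complex.exp (θ*Complex.I) * (starRingEnd ℂ) (Complex.exp (θ*Complex.I)) = 1 := by
    rw [← Complex.exp_conj, ← Complex.exp_add]
    simp
  have hs2 : Real.sqrt (2*xh^2 - ℏ^2*p xh) ^ 2 = 2*xh^2 - ℏ^2*p xh := Real.sq_sqrt hx2.le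
  have hsC : ((Real.sqrt (2*xh^2 - ℏ^2*p xh) : ℝ) : ℂ)^2
      = 2*(xh:ℂ)^2 - (ℏ:ℂ)^2*((p xh : ℝ):ℂ) := by
    rw [← Complex.ofReal_pow, hs2]; push_cast; ring
  have hzz : (ℏ:ℂ)^2 * (z * (starRingEnd ℂ) z)
      = 2*(xh:ℂ)^2 - (ℏ:ℂ)^2*((p xh : ℝ):ℂ) := by
    rw [hz]
    simp only [map_mul, Complex.conj_ofReal]
    rw [← hsC]
    push_cast
    field_simp
    linear_combination ((Real.sqrt (2*xh^2 - ℏ^2*p xh) : ℝ) : ℂ)^2 * hexp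
  have hz0 : z ≠ 0 := by
    rw [hz]
    apply mul_ne_zero (mul_ne_zero _ (Complex.exp_ne_zero _))
    · exact Complex.ofReal_ne_zero.mpr (Real.sqrt_pos.mpr hx2).ne'
    · exact Complex.ofReal_ne_zero.mpr (by positivity)
  -- hx1 over ℂ
  have hx1' : ℏ^2 * (2*p xh + xh * deriv p xh) = 4 * xh^2 := by
    field_simp at hx1; linarith
  have hx1C : (ℏ:ℂ)^2*(2*((p xh:ℝ):ℂ) + (xh:ℂ)*((deriv p xh:ℝ):ℂ)) = 4*(xh:ℂ)^2 := by
    exact_mod_cast congrArg Complex.ofReal hx1'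
  -- matrix division by 2
  have hdiv : ∀ M : Matrix (Fin 2) (Fin 2) ℂ, M / 2 = (2:ℂ)⁻¹ • M := by
    intro M
    have h2 : (2 : Matrix (Fin 2) (Fin 2) ℂ)⁻¹ = (2:ℂ)⁻¹ • 1 :=
      Matrix.inv_eq_right_inv (by
        rw [show (2:Matrix (Fin 2) (Fin 2) ℂ) = 1 + 1 from (one_add_one_eq_two).symm]
        ext i j
        fin_cases i <;> fin_cases j <;>
          simp [Matrix.one_apply] <;> norm_num)
    rw [div_eq_mul_inv, h2, Matrix.mul_smul, mul_one]
  have key1' : (ℏ:ℂ)^2 * (4*(xh:ℂ)*(z*(starRingEnd ℂ) z)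
      - (ℏ:ℂ)^2*(((p xh:ℝ):ℂ)*((deriv p xh:ℝ):ℂ))
      - (ℏ:ℂ)^2*(((deriv p xh:ℝ):ℂ)*(z*(starRingEnd ℂ) z))) = 0 := by
    linear_combination (4*(xh:ℂ) - (ℏ:ℂ)^2*((deriv p xh:ℝ):ℂ))*hzz - 2*(xh:ℂ)*hx1C
  have key1 : 4*(xh:ℂ)*(z*(starRingEnd ℂ) z)
      - (ℏ:ℂ)^2*(((p xh:ℝ):ℂ)*((deriv p xh:ℝ):ℂ))
      - (ℏ:ℂ)^2*(((deriv p xh:ℝ):ℂ)*(z*(starRingEnd ℂ) z)) = 0 := by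
    rcases mul_eq_zero.mp key1' with h | h
    · exact absurd h (pow_ne_zero 2 hℏ0)
    · exact h
  refine ⟨?_, ?_, ?_, ?_⟩
  · rw [hZ, smul_smul, mul_one_div, div_self hI, one_smul]
  · subst hX hY hpX hp'X
    rw [hdiv, hpe, hdo]
    ext i j
    fin_cases i <;> fin_cases j <;>
      simp [Matrix.mul_apply, Fin.sum_univ_two, pow_two, Matrix.smul_apply,
        Matrix.add_apply, Matrix.sub_apply, Complex.ofReal_neg] <;>
      first
        | linear_combination key1
        | linear_combination (-1 : ℂ) * key1
  · subst hX hY hpX hp'X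
    rw [hpe, pow_three]
    ext i j
    fin_cases i <;> fin_cases j <;>
      simp [Matrix.mul_apply, Fin.sum_univ_two, Matrix.smul_apply,
        Matrix.add_apply, Matrix.sub_apply, Complex.ofReal_neg] <;>
      first
        | linear_combination (-2*z) * hzz
        | linear_combination (-2*(starRingEnd ℂ) z) * hzz
  · have hZ01 : Z 0 1 ≠ 0 := by
      rw [hZ, Matrix.smul_apply]
      have e : (X*Y - Y*X) 0 1 = 2*(xh:ℂ)*z := by
        subst hX hY
        simp [Matrix.mul_apply, Fin.sum_univ_two, Matrix.sub_apply]
        push_cast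
        ring
      rw [e, smul_eq_mul]
      exact mul_ne_zero (one_div_ne_zero hI)
        (mul_ne_zero (mul_ne_zero two_ne_zero (Complex.ofReal_ne_zero.mpr hx0)) hz0)
    intro hzero
    exact hZ01 (by rw [hzero]; simp)
end

section
/- For every ℏ > 0 and integer g ≥ 2, there exists x̂ > g−1 such that 2p(x̂) + x̂p'(x̂) − 4x̂²/ℏ² = 0 and 2x̂²/ℏ² − p(x̂) > 0. -/
set_option maxHeartbeats 1000000 in
theorem stmt_13 (g : ℕ) (hg : 2 ≤ g) (α c ℏ : ℝ) (hc : 0 < c) (hℏ : 0 < ℏ)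
    (G : ℝ → ℝ) (hG : ∀ t, G t = ∏ k ∈ Finset.Icc 1 g, (t - (k : ℝ)^2))
    (M : ℝ) (hM : IsGreatest (G '' Set.Icc (0 : ℝ) ((g : ℝ)^2 + 1)) M)
    (hα : 0 < α) (hαM : α < 2 * Real.sqrt c / M)
    (p : ℝ → ℝ) (hp : ∀ x, p x = α * G (x^2) - Real.sqrt c) :
    ∃ xh : ℝ, xh > (g : ℝ) - 1 ∧
      2 * p xh + xh * deriv p xh - 4 * xh^2 / ℏ^2 = 0 ∧
      2 * xh^2 / ℏ^2 - p xh > 0 := by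
  have hc' : 0 < Real.sqrt c := Real.sqrt_pos.mpr hc
  have hℏ2 : (0:ℝ) < ℏ^2 := by positivity
  have hg2 : (2:ℝ) ≤ (g:ℝ) := by exact_mod_cast hg
  -- polynomial representation for differentiability
  set P : Polynomial ℝ := Polynomial.C α *
      (∏ k ∈ Finset.Icc 1 g, ((Polynomial.X)^2 - Polynomial.C ((k:ℝ)^2))) -
      Polynomial.C (Real.sqrt c) with hP
  have hpP : p = fun x => P.eval x := by
    funext x
    rw [hp x, hG]
    simp [hP, Polynomial.eval_prod]
  have hdp : Differentiable ℝ p := by rw [hpP]; exact P.differentiable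
  set F : ℝ → ℝ := fun x => x^2 * p x - x^4 / ℏ^2 with hFdef
  have hFd : ∀ x : ℝ, HasDerivAt F
      (x * (2 * p x + x * deriv p x - 4 * x^2 / ℏ^2)) x := by
    intro x
    have h1 : HasDerivAt p (deriv p x) x := (hdp x).hasDerivAt
    have h2 := ((hasDerivAt_pow 2 x).mul h1).sub ((hasDerivAt_pow 4 x).div_const (ℏ^2))
    refine h2.congr_deriv ?_
    push_cast
    ring
  have hFc : Continuous F :=
    ((continuous_pow 2).mul hdp.continuous).sub ((continuous_pow 4).div_const _)
  -- values of p at g and g-1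
  have hpg : p (g:ℝ) = - Real.sqrt c := by
    rw [hp, hG]
    have hmem : g ∈ Finset.Icc 1 g := Finset.mem_Icc.mpr ⟨by omega, le_refl g⟩
    have hz : ((g:ℝ))^2 - ((g:ℕ):ℝ)^2 = 0 := by ring
    rw [Finset.prod_eq_zero hmem hz]
    ring
  have hpg1 : p ((g:ℝ) - 1) = - Real.sqrt c := by
    rw [hp, hG]
    have hmem : g - 1 ∈ Finset.Icc 1 g := Finset.mem_Icc.mpr ⟨by omega, by omega⟩
    have hcast : ((g - 1 : ℕ):ℝ) = (g:ℝ) - 1 := by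
      push_cast [Nat.cast_sub (by omega : 1 ≤ g)]; ring
    have hz : (((g:ℝ) - 1))^2 - ((g - 1 : ℕ):ℝ)^2 = 0 := by rw [hcast]; ring
    rw [Finset.prod_eq_zero hmem hz]
    ring
  -- choice of right endpoint b
  set s : ℝ := max 1 ((1/ℏ^2 + Real.sqrt c + (g:ℝ)^2/ℏ^2 + α)/α) with hs
  have hs1 : (1:ℝ) ≤ s := le_max_left _ _
  have hs0 : (0:ℝ) ≤ s := by linarith
  have hsα : 1/ℏ^2 + Real.sqrt c + (g:ℝ)^2/ℏ^2 + α ≤ α * s := by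
    have := le_max_right (1:ℝ) ((1/ℏ^2 + Real.sqrt c + (g:ℝ)^2/ℏ^2 + α)/α)
    calc 1/ℏ^2 + Real.sqrt c + (g:ℝ)^2/ℏ^2 + α
        = α * ((1/ℏ^2 + Real.sqrt c + (g:ℝ)^2/ℏ^2 + α)/α) := by field_simp
      _ ≤ α * s := by
          exact mul_le_mul_of_nonneg_left this hα.le
  set b : ℝ := Real.sqrt ((g:ℝ)^2 + s) with hbdef
  have hbnn : 0 ≤ b := Real.sqrt_nonneg _
  have hb2 : b^2 = (g:ℝ)^2 + s := Real.sq_sqrt (by positivity)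
  have hgb : (g:ℝ) ≤ b := by nlinarith
  -- product lower bound at b
  have hGb : s^2 ≤ G (b^2) := by
    rw [hG]
    have h1 : ∏ _k ∈ Finset.Icc 1 g, s ≤ ∏ k ∈ Finset.Icc 1 g, (b^2 - (k:ℝ)^2) := by
      apply Finset.prod_le_prod
      · intro i _; exact hs0
      · intro i hi
        have hig : i ≤ g := (Finset.mem_Icc.mp hi).2
        have : ((i:ℝ))^2 ≤ ((g:ℝ))^2 := by
          have : (i:ℝ) ≤ (g:ℝ) := by exact_mod_cast hig
          nlinarith [Nat.cast_nonneg (α := ℝ) i]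
        rw [hb2]; linarith
    rw [Finset.prod_const, Nat.card_Icc] at h1
    have h2 : s^2 ≤ s^(g + 1 - 1) := by
      rw [Nat.add_sub_cancel]
      exact pow_le_pow_right₀ hs1 hg
    linarith
  have hFb : 0 < F b := by
    have hpb : p b = α * G (b^2) - Real.sqrt c := hp b
    have key : Real.sqrt c + ((g:ℝ)^2 + s)/ℏ^2 < α * G (b^2) := by
      have hαG : α * s^2 ≤ α * G (b^2) := mul_le_mul_of_nonneg_left hGb hα.le
      have hmul : (1/ℏ^2 + Real.sqrt c + (g:ℝ)^2/ℏ^2 + α) * s ≤ α * s * s :=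
        mul_le_mul_of_nonneg_right hsα hs0
      have h3 : 0 ≤ (s - 1) * Real.sqrt c := mul_nonneg (by linarith) hc'.le
      have h4 : 0 ≤ (s - 1) * ((g:ℝ)^2/ℏ^2) :=
        mul_nonneg (by linarith) (by positivity)
      have h5 : 0 < α * s := by nlinarith
      have hd : ((g:ℝ)^2 + s)/ℏ^2 = (g:ℝ)^2/ℏ^2 + s * (1/ℏ^2) := by ring
      nlinarith
    have hb4 : b^4 = ((g:ℝ)^2 + s)^2 := by rw [show b^4 = (b^2)^2 by ring, hb2]
    have hFbeq : F b = ((g:ℝ)^2 + s) * (α * G (b^2) - Real.sqrt c) -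
        ((g:ℝ)^2 + s)^2 / ℏ^2 := by
      simp only [hFdef]; rw [hpb, hb2, hb4]
    rw [hFbeq]
    have ht0 : (0:ℝ) < (g:ℝ)^2 + s := by positivity
    have := mul_pos ht0 (show (0:ℝ) < α * G (b^2) - Real.sqrt c - ((g:ℝ)^2 + s)/ℏ^2 by linarith)
    have heq : ((g:ℝ)^2 + s) * (α * G (b^2) - Real.sqrt c - ((g:ℝ)^2 + s)/ℏ^2) =
        ((g:ℝ)^2 + s) * (α * G (b^2) - Real.sqrt c) - ((g:ℝ)^2 + s)^2 / ℏ^2 := by ring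
    linarith [heq ▸ this]
  -- min of F on [g-1, b]
  have hab : (g:ℝ) - 1 ≤ b := by linarith
  obtain ⟨xh, hxhmem, hxhmin⟩ :=
    isCompact_Icc.exists_isMinOn (Set.nonempty_Icc.mpr hab) hFc.continuousOn
  obtain ⟨hxl, hxr⟩ := Set.mem_Icc.mp hxhmem
  have hgmem : (g:ℝ) ∈ Set.Icc ((g:ℝ) - 1) b := Set.mem_Icc.mpr ⟨by linarith, hgb⟩
  have hFxg : F xh ≤ F (g:ℝ) := hxhmin hgmem
  have hFgval : F (g:ℝ) = (g:ℝ)^2 * (-Real.sqrt c) - (g:ℝ)^4/ℏ^2 := by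
    simp only [hFdef]; rw [hpg]
  have hFg1val : F ((g:ℝ) - 1) = ((g:ℝ) - 1)^2 * (-Real.sqrt c) - ((g:ℝ) - 1)^4/ℏ^2 := by
    simp only [hFdef]; rw [hpg1]
  have hFglt : F (g:ℝ) < F ((g:ℝ) - 1) := by
    rw [hFgval, hFg1val]
    have h0 : ((g:ℝ) - 1)^2 < (g:ℝ)^2 := by nlinarith
    have h1 : ((g:ℝ) - 1)^2 * Real.sqrt c < (g:ℝ)^2 * Real.sqrt c :=
      mul_lt_mul_of_pos_right h0 hc'
    have h2 : ((g:ℝ) - 1)^4 / ℏ^2 ≤ (g:ℝ)^4 / ℏ^2 := by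
      have h3 : ((g:ℝ) - 1)^4 ≤ (g:ℝ)^4 :=
        pow_le_pow_left₀ (by linarith) (by linarith) 4
      exact div_le_div_of_nonneg_right h3 hℏ2.le
    linarith
  have hFgneg : F (g:ℝ) < 0 := by
    rw [hFgval]
    have h1 : 0 < (g:ℝ)^2 * Real.sqrt c := by nlinarith
    have h2 : 0 ≤ (g:ℝ)^4 / ℏ^2 := by positivity
    linarith
  have hxne1 : xh ≠ (g:ℝ) - 1 := by
    intro h; rw [h] at hFxg; linarith
  have hxneb : xh ≠ b := by
    intro h; rw [h] at hFxg; linarith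
  have hxl' : (g:ℝ) - 1 < xh := lt_of_le_of_ne hxl (Ne.symm hxne1)
  have hxr' : xh < b := lt_of_le_of_ne hxr hxneb
  have hx0 : 0 < xh := by linarith
  -- derivative vanishes
  have hloc : IsLocalMin F xh := hxhmin.isLocalMin (Icc_mem_nhds hxl' hxr')
  have hder0 : deriv F xh = 0 := hloc.deriv_eq_zero
  have hderval : deriv F xh = xh * (2 * p xh + xh * deriv p xh - 4 * xh^2 / ℏ^2) :=
    (hFd xh).deriv
  have heq0 : 2 * p xh + xh * deriv p xh - 4 * xh^2 / ℏ^2 = 0 := by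
    rcases mul_eq_zero.mp (hderval ▸ hder0) with h | h
    · exact absurd h (ne_of_gt hx0)
    · exact h
  -- the inequality
  have hFxneg : xh^2 * p xh - xh^4/ℏ^2 < 0 := by
    have : F xh < 0 := lt_of_le_of_lt hFxg hFgneg
    simpa [hFdef] using this
  have hplt : p xh < xh^2/ℏ^2 := by
    have h1 : xh^2 * p xh < xh^2 * (xh^2/ℏ^2) := by
      have : xh^2 * (xh^2/ℏ^2) = xh^4/ℏ^2 := by ring
      linarith [this]
    exact lt_of_mul_lt_mul_left h1 (sq_nonneg xh)
  refine ⟨xh, hxl', heq0, ?_⟩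
  have hpos : 0 < xh^2/ℏ^2 := by positivity
  have : 2 * xh^2 / ℏ^2 = 2 * (xh^2/ℏ^2) := by ring
  linarith
end

section
/- Let x̂ ≠ 0 and suppose x̂² − ℏ²(p(0)+p(x̂)) > 0 and (2x̂/ℏ² − p'(x̂))(x̂²/ℏ² − p(0) − p(x̂)) = 4p(x̂)p'(x̂). Set r = (1/(2ℏ))√(x̂² − ℏ²(p(0)+p(x̂))), z₁ = e^{iθ₁}r, z₂ = e^{iθ₂}r. Then the 3×3 matrices X = diag(0, x̂, −x̂), Y with Y₀₁ = z₁, Y₀₂ = z₂, Y₁₀ = z̄₁, Y₂₀ = z̄₂ and all other entries zero, and Z = (1/(iℏ))[X,Y] satisfy the relations [[X,Y],Y] = ℏ²(p(X)p'(X) + (p'(X)Y² + Y²p'(X))/2) and [[Y,X],X] = ℏ²(2Y³ + Yp(X) + p(X)Y), and Z ≠ 0. -/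
private lemma stmt19_inv2 : (2 : Matrix (Fin 3) (Fin 3) ℂ)⁻¹ = (2:ℂ)⁻¹ • 1 := by
  apply Matrix.inv_eq_right_inv
  ext i j
  simp [← one_add_one_eq_two, Matrix.add_apply, Matrix.one_apply, Matrix.mul_apply,
    Fin.sum_univ_three, Matrix.smul_apply]
  by_cases h : i = j <;> simp [h]

private lemma stmt19_aux1 (xh hb pv p'v p0 rr z₁ z₂ : ℂ)
    (c1 : (starRingEnd ℂ) z₁ * z₁ = rr^2)
    (c2 : (starRingEnd ℂ) z₂ * z₂ = rr^2)
    (key1c : rr^2 * (2*xh - hb^2*p'v) = hb^2 * (pv * p'v))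
    (X Y pX p'X : Matrix (Fin 3) (Fin 3) ℂ)
    (hX : X = Matrix.diagonal ![0, xh, -xh])
    (hY : Y = !![0, z₁, z₂; (starRingEnd ℂ) z₁, 0, 0; (starRingEnd ℂ) z₂, 0, 0])
    (hpX : pX = Matrix.diagonal ![p0, pv, pv])
    (hp'X : p'X = Matrix.diagonal ![0, p'v, -p'v]) :
    (X * Y - Y * X) * Y - Y * (X * Y - Y * X)
      = (hb^2) • (pX * p'X + (2:ℂ)⁻¹ • (p'X * Y^2 + Y^2 * p'X)) := by
  subst hX hY hpX hp'X
  ext i j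
  fin_cases i <;> fin_cases j <;>
    simp [Matrix.mul_apply, Fin.sum_univ_three, pow_two, Matrix.diagonal_apply,
      Matrix.vecHead, Matrix.vecTail, Matrix.smul_apply, smul_eq_mul, -Matrix.cons_mul,
      Matrix.vecMul, dotProduct] <;>
    first
      | linear_combination 2*xh*c2 - 2*xh*c1
      | linear_combination 2*xh*c1 - 2*xh*c2
      | linear_combination (2*xh - hb^2*p'v)*c1 + key1c
      | linear_combination -((2*xh - hb^2*p'v)*c1) - key1c
      | linear_combination (2*xh - hb^2*p'v)*c2 + key1c
      | linear_combination -((2*xh - hb^2*p'v)*c2) - key1c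
      | linear_combination c1 - c2
      | linear_combination c2 - c1
      | ring1

set_option maxHeartbeats 1000000 in
private lemma stmt19_aux2 (xh hb pv p0 rr z₁ z₂ : ℂ)
    (c1 : (starRingEnd ℂ) z₁ * z₁ = rr^2)
    (c2 : (starRingEnd ℂ) z₂ * z₂ = rr^2)
    (key2c : xh^2 = hb^2 * (4*rr^2 + p0 + pv))
    (X Y pX : Matrix (Fin 3) (Fin 3) ℂ)
    (hX : X = Matrix.diagonal ![0, xh, -xh])
    (hY : Y = !![0, z₁, z₂; (starRingEnd ℂ) z₁, 0, 0; (starRingEnd ℂ) z₂, 0, 0])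
    (hpX : pX = Matrix.diagonal ![p0, pv, pv]) :
    (Y * X - X * Y) * X - X * (Y * X - X * Y)
      = (hb^2) • (2 • (Y^3) + Y * pX + pX * Y) := by
  subst hX hY hpX
  ext i j
  fin_cases i <;> fin_cases j <;>
    simp [Matrix.mul_apply, Fin.sum_univ_three, pow_succ, pow_zero, Matrix.diagonal_apply,
      Matrix.vecHead, Matrix.vecTail, Matrix.smul_apply, smul_eq_mul, -Matrix.cons_mul,
      Matrix.vecMul, dotProduct, -nsmul_eq_mul]
  all_goals first
      | linear_combination z₁*key2c - 2*hb^2*z₁*c1 - 2*hb^2*z₁*c2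
      | linear_combination z₂*key2c - 2*hb^2*z₂*c1 - 2*hb^2*z₂*c2
      | linear_combination (starRingEnd ℂ) z₁*key2c - 2*hb^2*(starRingEnd ℂ) z₁*c1 - 2*hb^2*(starRingEnd ℂ) z₁*c2
      | linear_combination (starRingEnd ℂ) z₂*key2c - 2*hb^2*(starRingEnd ℂ) z₂*c1 - 2*hb^2*(starRingEnd ℂ) z₂*c2


theorem stmt_19 (g : ℕ) (hg : 1 ≤ g) (α c ℏ : ℝ)
    (hα : 0 < α) (hc : 0 < c) (hℏ : 0 < ℏ)
    (p : ℝ → ℝ)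
    (hp : ∀ x, p x = α * ∏ k ∈ Finset.Icc 1 g, (x^2 - (k : ℝ)^2) - Real.sqrt c)
    (xh : ℝ) (hxh : xh ≠ 0)
    (h1 : xh^2 - ℏ^2 * (p 0 + p xh) > 0)
    (h2 : (2 * xh / ℏ^2 - deriv p xh) * (xh^2 / ℏ^2 - p 0 - p xh)
            = 4 * p xh * deriv p xh)
    (r : ℝ) (hr : r = (1 / (2 * ℏ)) * Real.sqrt (xh^2 - ℏ^2 * (p 0 + p xh)))
    (θ₁ θ₂ : ℝ) (z₁ z₂ : ℂ)
    (hz₁ : z₁ = Complex.exp (θ₁ * Complex.I) * (r : ℂ))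
    (hz₂ : z₂ = Complex.exp (θ₂ * Complex.I) * (r : ℂ))
    (X Y Z pX p'X : Matrix (Fin 3) (Fin 3) ℂ)
    (hX : X = Matrix.diagonal ![0, Complex.ofReal xh, Complex.ofReal (-xh)])
    (hY : Y = !![0, z₁, z₂;
                 (starRingEnd ℂ) z₁, 0, 0;
                 (starRingEnd ℂ) z₂, 0, 0])
    (hZ : Z = (1 / (Complex.I * ℏ)) • (X * Y - Y * X))
    (hpX : pX = Matrix.diagonal
      ![Complex.ofReal (p 0), Complex.ofReal (p xh), Complex.ofReal (p (-xh))])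
    (hp'X : p'X = Matrix.diagonal
      ![Complex.ofReal (deriv p 0), Complex.ofReal (deriv p xh),
        Complex.ofReal (deriv p (-xh))]) :
    (X * Y - Y * X) * Y - Y * (X * Y - Y * X)
      = ((ℏ : ℂ)^2) • (pX * p'X + (p'X * Y^2 + Y^2 * p'X) / 2) ∧
    (Y * X - X * Y) * X - X * (Y * X - X * Y)
      = ((ℏ : ℂ)^2) • (2 • (Y^3) + Y * pX + pX * Y) ∧
    Z ≠ 0 := by
  -- symmetry facts about p
  have heven : ∀ x, p (-x) = p x := by intro x; rw [hp, hp]; simp [neg_sq]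
  have hfun : (fun y => p (-y)) = p := funext heven
  have hodd : ∀ x, deriv p (-x) = -deriv p x := by
    intro x
    have h := deriv_comp_neg p x
    rw [hfun] at h
    linarith
  have hd0 : deriv p 0 = 0 := by have := hodd 0; simp at this; linarith
  have hℏ0 : (ℏ:ℝ) ≠ 0 := ne_of_gt hℏ
  have hℏ2 : (ℏ:ℝ)^2 ≠ 0 := pow_ne_zero _ hℏ0
  -- r facts
  have hrpos : 0 < r := by
    rw [hr]
    have := Real.sqrt_pos.mpr h1
    positivity
  have hr2 : 4 * ℏ^2 * r^2 = xh^2 - ℏ^2 * (p 0 + p xh) := by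
    rw [hr, mul_pow, Real.sq_sqrt h1.le]
    field_simp
    ring
  have h2' : (2 * xh - ℏ^2 * deriv p xh) * (xh^2 - ℏ^2 * (p 0 + p xh))
      = 4 * ℏ^4 * (p xh * deriv p xh) := by
    have e1 : 2 * xh / ℏ^2 - deriv p xh = (2 * xh - ℏ^2 * deriv p xh) / ℏ^2 := by
      field_simp
    have e2 : xh^2 / ℏ^2 - p 0 - p xh = (xh^2 - ℏ^2 * (p 0 + p xh)) / ℏ^2 := by
      field_simp; ring
    rw [e1, e2, div_mul_div_comm] at h2
    have := h2
    field_simp at this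
    linarith [this]
  have key1 : r^2 * (2 * xh - ℏ^2 * deriv p xh) = ℏ^2 * (p xh * deriv p xh) := by
    have h4 : (4 * ℏ^2 : ℝ) ≠ 0 := by positivity
    apply mul_left_cancel₀ h4
    linear_combination (2 * xh - ℏ^2 * deriv p xh) * hr2 + h2'
  have key2 : xh^2 = ℏ^2 * (4 * r^2 + p 0 + p xh) := by linear_combination -hr2
  -- complex casts
  have key1c : (r:ℂ)^2 * (2 * (xh:ℂ) - (ℏ:ℂ)^2 * (deriv p xh : ℝ))
      = (ℏ:ℂ)^2 * ((p xh : ℝ) * (deriv p xh : ℝ)) := by exact_mod_cast congrArg Complex.ofReal key1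
  have key2c : (xh:ℂ)^2 = (ℏ:ℂ)^2 * (4 * (r:ℂ)^2 + (p 0 : ℝ) + (p xh : ℝ)) := by
    exact_mod_cast congrArg Complex.ofReal key2
  -- conjugation facts
  have cexp : ∀ θ : ℝ, (starRingEnd ℂ) (Complex.exp (θ * Complex.I)) * Complex.exp (θ * Complex.I) = 1 := by
    intro θ
    rw [← Complex.exp_conj, ← Complex.exp_add]
    have : (starRingEnd ℂ) ((θ:ℂ) * Complex.I) + (θ:ℂ) * Complex.I = 0 := by
      simp [map_mul, Complex.conj_ofReal, Complex.conj_I]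
    rw [this, Complex.exp_zero]
  have c1 : (starRingEnd ℂ) z₁ * z₁ = (r:ℂ)^2 := by
    rw [hz₁, map_mul, Complex.conj_ofReal]
    calc (starRingEnd ℂ) (Complex.exp (θ₁ * Complex.I)) * (r:ℂ) * (Complex.exp (θ₁ * Complex.I) * (r:ℂ))
        = (r:ℂ)^2 * ((starRingEnd ℂ) (Complex.exp (θ₁ * Complex.I)) * Complex.exp (θ₁ * Complex.I)) := by ring
      _ = (r:ℂ)^2 := by rw [cexp θ₁]; ring
  have c2 : (starRingEnd ℂ) z₂ * z₂ = (r:ℂ)^2 := by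
    rw [hz₂, map_mul, Complex.conj_ofReal]
    calc (starRingEnd ℂ) (Complex.exp (θ₂ * Complex.I)) * (r:ℂ) * (Complex.exp (θ₂ * Complex.I) * (r:ℂ))
        = (r:ℂ)^2 * ((starRingEnd ℂ) (Complex.exp (θ₂ * Complex.I)) * Complex.exp (θ₂ * Complex.I)) := by ring
      _ = (r:ℂ)^2 := by rw [cexp θ₂]; ring
  -- normalized matrix hypotheses
  have hX' : X = Matrix.diagonal ![0, (xh:ℂ), -(xh:ℂ)] := by rw [hX]; norm_cast
  have hpX' : pX = Matrix.diagonal ![(p 0 : ℂ), (p xh : ℂ), (p xh : ℂ)] := by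
    rw [hpX, heven]
  have hp'X' : p'X = Matrix.diagonal ![0, ((deriv p xh : ℝ) : ℂ), -((deriv p xh : ℝ) : ℂ)] := by
    rw [hp'X, hodd, hd0]; norm_cast
  refine ⟨?_, ?_, ?_⟩
  · have hdiv : (p'X * Y^2 + Y^2 * p'X) / 2 = (2:ℂ)⁻¹ • (p'X * Y^2 + Y^2 * p'X) := by
      rw [div_eq_mul_inv, stmt19_inv2, Matrix.mul_smul, Matrix.mul_one]
    rw [hdiv]
    exact stmt19_aux1 _ _ _ _ _ _ _ _ c1 c2 key1c X Y pX p'X hX' hY hpX' hp'X'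
  · exact stmt19_aux2 _ _ _ _ _ _ _ c1 c2 key2c X Y pX hX' hY hpX'
  · intro hcon
    have h01 : Z 0 1 = 0 := by rw [hcon]; simp
    rw [hZ] at h01
    simp [hX', hY, Matrix.mul_apply, Fin.sum_univ_three, Matrix.smul_apply,
      -Matrix.cons_mul, Matrix.vecMul, dotProduct, Matrix.diagonal_apply,
      Matrix.vecHead, Matrix.vecTail] at h01
    rcases h01 with h | h | h
    · exact hℏ0 (by exact_mod_cast h)
    · rw [hz₁] at h
      exact mul_ne_zero (Complex.exp_ne_zero _)
        (by exact_mod_cast hrpos.ne' : (r:ℂ) ≠ 0) h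
    · exact hxh (by exact_mod_cast h)
end
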